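/- Suppose a/b and c/d are fractions in lowest terms (gcd(a,b) = gcd(c,d) = 1) with b and d odd, a and c of opposite parity, and the cross-difference bc - ad odd. Then after reducing the weighted mediants (2a+c)/(2b+d) and (a+2c)/(b+2d) to lowest terms, both resulting denominators are odd and the numerators of the four fractions a/b, reduced left mediant, reduced right mediant, c/d alternate in parity. -/

import Mathlib

lemma odd_of_dvd_odd {g n : ℤ} (h : g ∣ n) (hn : Odd n) : Odd g := by
  rw [← Int.not_even_iff_odd] at hn ⊢
  simp only [even_iff_two_dvd] at hn ⊢
  exact fun he => hn (he.trans h)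

lemma quot_parity {n g : ℤ} (h : g ∣ n) (hg : Odd g) : Odd (n / g) ↔ Odd n := by
  obtain ⟨k, rfl⟩ := h
  rw [Int.mul_ediv_cancel_left _ (by rintro rfl; exact (Int.not_odd_iff_even.mpr Even.zero) hg),
    Int.odd_mul]
  simp [hg]

/-- If a/b, c/d are in lowest terms with odd denominators, numerators of
opposite parity, and odd cross-difference, then the reduced mediants have odd
denominators and the four numerators alternate in parity. -/
theorem reduced_mediants_parity (a b c d : ℤ) (hb : 0 < b) (hd : 0 < d)
    (hab : Int.gcd a b = 1) (hcd : Int.gcd c d = 1)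
    (hbodd : Odd b) (hdodd : Odd d)
    (hac : Odd a ↔ Even c)
    (hX : Odd (b * c - a * d)) :
    Odd ((2 * b + d) / (Int.gcd (2 * a + c) (2 * b + d) : ℤ)) ∧
    Odd ((b + 2 * d) / (Int.gcd (a + 2 * c) (b + 2 * d) : ℤ)) ∧
    (Odd a ↔ Even ((2 * a + c) / (Int.gcd (2 * a + c) (2 * b + d) : ℤ))) ∧
    (Odd ((2 * a + c) / (Int.gcd (2 * a + c) (2 * b + d) : ℤ)) ↔
      Even ((a + 2 * c) / (Int.gcd (a + 2 * c) (b + 2 * d) : ℤ))) ∧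
    (Odd ((a + 2 * c) / (Int.gcd (a + 2 * c) (b + 2 * d) : ℤ)) ↔ Even c) := by
  have hD1 : Odd (2 * b + d) := by
    rcases hdodd with ⟨k, hk⟩; exact ⟨b + k, by linarith⟩
  have hD2 : Odd (b + 2 * d) := by
    rcases hbodd with ⟨k, hk⟩; exact ⟨k + d, by linarith⟩
  have hg1d : (Int.gcd (2 * a + c) (2 * b + d) : ℤ) ∣ (2 * b + d) := Int.gcd_dvd_right _ _
  have hg1n : (Int.gcd (2 * a + c) (2 * b + d) : ℤ) ∣ (2 * a + c) := Int.gcd_dvd_left _ _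
  have hg2d : (Int.gcd (a + 2 * c) (b + 2 * d) : ℤ) ∣ (b + 2 * d) := Int.gcd_dvd_right _ _
  have hg2n : (Int.gcd (a + 2 * c) (b + 2 * d) : ℤ) ∣ (a + 2 * c) := Int.gcd_dvd_left _ _
  have hg1o : Odd (Int.gcd (2 * a + c) (2 * b + d) : ℤ) := odd_of_dvd_odd hg1d hD1
  have hg2o : Odd (Int.gcd (a + 2 * c) (b + 2 * d) : ℤ) := odd_of_dvd_odd hg2d hD2
  have hN1 : Odd ((2 * a + c) / (Int.gcd (2 * a + c) (2 * b + d) : ℤ)) ↔ Odd c := by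
    rw [quot_parity hg1n hg1o]
    constructor
    · rintro ⟨k, hk⟩; exact ⟨k - a, by linarith⟩
    · rintro ⟨k, hk⟩; exact ⟨a + k, by linarith⟩
  have hN2 : Odd ((a + 2 * c) / (Int.gcd (a + 2 * c) (b + 2 * d) : ℤ)) ↔ Odd a := by
    rw [quot_parity hg2n hg2o]
    constructor
    · rintro ⟨k, hk⟩; exact ⟨k - c, by linarith⟩
    · rintro ⟨k, hk⟩; exact ⟨k + c, by linarith⟩
  refine ⟨(quot_parity hg1d hg1o).mpr hD1, (quot_parity hg2d hg2o).mpr hD2, ?_, ?_, ?_⟩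
  · rw [← Int.not_odd_iff_even, hN1, Int.not_odd_iff_even]; exact hac
  · rw [hN1, ← Int.not_odd_iff_even, hN2, ← Int.not_even_iff_odd, ← Int.not_even_iff_odd] at *
    tauto
  · rw [hN2]; exact hac
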